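/- Let G be a connected infinite graph in which every vertex has degree at most b for some natural number b. Then the chromatic number of G is at most b. -/
import Mathlib

open SimpleGraph

/-- Along a walk from a vertex in `T` to a vertex outside `T`, some edge crosses out of `T`. -/
lemma walk_crosses {V : Type*} {G : SimpleGraph V} {T : Finset V} :
    ∀ {u w : V}, G.Walk u w → u ∈ T → w ∉ T → ∃ t ∈ T, ∃ y, y ∉ T ∧ G.Adj t y
  | _, _, SimpleGraph.Walk.nil, hu, hw => absurd hu hw
  | u, w, SimpleGraph.Walk.cons (v := x) h p, hu, hw => by
    by_cases hx : x ∈ T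
    · exact walk_crosses p hx hw
    · exact ⟨u, hu, x, hx, h⟩

/-- In a connected graph with infinitely many vertices, every finite nonempty set of
vertices has a member with a neighbor outside the set. -/
lemma exists_boundary {V : Type*} [Infinite V] {G : SimpleGraph V} (hconn : G.Connected)
    (T : Finset V) (hT : T.Nonempty) : ∃ t ∈ T, ∃ y, y ∉ T ∧ G.Adj t y := by
  obtain ⟨u, hu⟩ := hT
  obtain ⟨w, hw⟩ := T.exists_notMem
  obtain ⟨p⟩ := hconn.preconnected u w
  exact walk_crosses p hu hw

/-- Greedy coloring of a finite set of vertices with `b` colors, peeling off a vertex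
with a neighbor outside the set. -/
lemma colorable_on {V : Type*} [Infinite V] {G : SimpleGraph V} [G.LocallyFinite]
    (hconn : G.Connected) {b : ℕ} (hb : 1 ≤ b) (hdeg : ∀ v, G.degree v ≤ b) :
    ∀ n (T : Finset V), T.card = n →
      ∃ c : V → Fin b, ∀ u ∈ T, ∀ v ∈ T, G.Adj u v → c u ≠ c v := by
  classical
  intro n
  induction n with
  | zero =>
    intro T hT
    rw [Finset.card_eq_zero] at hT
    subst hT
    exact ⟨fun _ => ⟨0, hb⟩, by simp⟩
  | succ n ih =>
    intro T hT
    have hTne : T.Nonempty := Finset.card_pos.mp (by omega)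
    obtain ⟨t, htT, w, hwT, hadj⟩ := exists_boundary hconn T hTne
    set T' := T.erase t with hT'
    have hcard : T'.card = n := by
      rw [hT', Finset.card_erase_of_mem htT, hT]
      omega
    obtain ⟨c, hc⟩ := ih T' hcard
    -- neighbors of `t` inside `T'`
    set N : Finset V := (G.neighborFinset t).filter (· ∈ T') with hN
    have hNcard : N.card < b := by
      have hsub : N ⊆ (G.neighborFinset t).erase w := by
        intro x hx
        rw [hN, Finset.mem_filter] at hx
        refine Finset.mem_erase.mpr ⟨?_, hx.1⟩
        rintro rfl
        exact hwT (Finset.mem_of_mem_erase hx.2)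
      have hw' : w ∈ G.neighborFinset t := by
        rw [SimpleGraph.mem_neighborFinset]; exact hadj
      have : N.card ≤ (G.neighborFinset t).card - 1 := by
        calc N.card ≤ ((G.neighborFinset t).erase w).card := Finset.card_le_card hsub
        _ = (G.neighborFinset t).card - 1 := Finset.card_erase_of_mem hw'
      have hdt : (G.neighborFinset t).card ≤ b := by
        rw [G.card_neighborFinset_eq_degree]
        exact hdeg t
      have hdpos : 0 < (G.neighborFinset t).card := Finset.card_pos.mpr ⟨w, hw'⟩
      omega
    -- find a free color for `t`
    have himg : (N.image c).card < b := lt_of_le_of_lt Finset.card_image_le hNcard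
    have : ∃ a : Fin b, a ∉ N.image c := by
      by_contra hcon
      push_neg at hcon
      have : (Finset.univ : Finset (Fin b)) ⊆ N.image c := fun a _ => hcon a
      have := Finset.card_le_card this
      simp [Fintype.card_fin] at this
      omega
    obtain ⟨a, ha⟩ := this
    refine ⟨Function.update c t a, ?_⟩
    intro u hu v hv huv
    have key : ∀ x ∈ T', G.Adj t x → c x ≠ a := by
      intro x hx hax hcx
      have hxN : x ∈ N := by
        rw [hN, Finset.mem_filter, SimpleGraph.mem_neighborFinset]
        exact ⟨hax, hx⟩
      exact ha (Finset.mem_image.mpr ⟨x, hxN, hcx⟩)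
    by_cases hut : u = t
    · have hvt : v ≠ t := fun h => huv.ne (hut.trans h.symm)
      have hv' : v ∈ T' := Finset.mem_erase.mpr ⟨hvt, hv⟩
      have huv' : G.Adj t v := hut ▸ huv
      rw [hut, Function.update_self, Function.update_of_ne hvt]
      exact fun h => key v hv' huv' h.symm
    · by_cases hvt : v = t
      · have hu' : u ∈ T' := Finset.mem_erase.mpr ⟨hut, hu⟩
        have huv' : G.Adj t u := hvt ▸ huv.symm
        rw [hvt, Function.update_self, Function.update_of_ne hut]
        exact key u hu' huv'
      · rw [Function.update_of_ne hut, Function.update_of_ne hvt]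
        exact hc u (Finset.mem_erase.mpr ⟨hut, hu⟩) v (Finset.mem_erase.mpr ⟨hvt, hv⟩) huv

/-- Behzad–Radjavi: a connected infinite graph with all degrees at most `b` has
chromatic number at most `b`. -/
theorem stmt_7 {V : Type*} [Infinite V] (G : SimpleGraph V) [G.LocallyFinite]
    (hconn : G.Connected) (b : ℕ) (hdeg : ∀ v, G.degree v ≤ b) :
    G.chromaticNumber ≤ b := by
  classical
  rw [SimpleGraph.chromaticNumber_le_iff_colorable]
  -- `b ≥ 1`
  have hb : 1 ≤ b := by
    obtain ⟨v⟩ := (inferInstance : Nonempty V)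
    obtain ⟨u, hu⟩ := exists_ne v
    obtain ⟨p⟩ := hconn.preconnected v u
    have : ∃ w, G.Adj v w := by
      cases p with
      | nil => exact absurd rfl hu
      | cons h q => exact ⟨_, h⟩
    have := (G.degree_pos_iff_exists_adj v).mpr this
    exact le_trans this (hdeg v)
  -- reduce to finite subgraphs via compactness
  have key : ∀ G' : G.Subgraph, G'.verts.Finite →
      (G'.coe →g completeGraph (Fin b)) := by
    intro G' hfin
    have hcol := colorable_on hconn hb hdeg hfin.toFinset.card hfin.toFinset rfl
    refine ⟨fun v => hcol.choose v.1, ?_⟩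
    rintro ⟨u, hu⟩ ⟨v, hv⟩ huv
    exact hcol.choose_spec u (by simpa using hu) v (by simpa using hv) (G'.adj_sub huv)
  obtain ⟨f⟩ := SimpleGraph.nonempty_hom_of_forall_finite_subgraph_hom key
  exact ⟨f⟩
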